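/- If each data point is either 'easy' (every hypothesis in the support of μ predicts the true label) or 'hard' (the prediction h(x) under h ∼ μ is uniformly distributed over the K classes), then the Generalization Disagreement Equality holds pointwise: for every x, the expected disagreement at x equals the expected error at x, namely 0 if x is easy and (K−1)/K if x is hard. -/

import Mathlib

/-- If every data point is either 'easy' (all hypotheses in the support
predict the true label) or 'hard' (the sampled prediction is uniform over the `K`
classes), then GDE holds pointwise: for every `x` the expected disagreement equals
the expected error, namely `0` if `x` is easy and `(K−1)/K` if `x` is hard. -/
theorem easy_hard_pointwise_GDE
    {X H : Type} [Fintype H] (K : ℕ) [NeZero K]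
    (μ : H → ℝ) (hμ0 : ∀ h, 0 ≤ μ h) (hμ1 : ∑ h, μ h = 1)
    (hyp : H → X → Fin K) (Y : X → Fin K)
    (heasyhard : ∀ x : X,
      (∑ h, μ h * (if hyp h x = Y x then (1 : ℝ) else 0)) = 1 ∨
      (∀ k : Fin K, (∑ h, μ h * (if hyp h x = k then (1 : ℝ) else 0)) = 1 / K)) :
    ∀ x : X,
      ((∑ h, ∑ h', μ h * μ h' * (if hyp h x ≠ hyp h' x then (1 : ℝ) else 0)) =
        ∑ h, μ h * (if hyp h x ≠ Y x then (1 : ℝ) else 0)) ∧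
      ((∑ h, μ h * (if hyp h x = Y x then (1 : ℝ) else 0)) = 1 →
        (∑ h, μ h * (if hyp h x ≠ Y x then (1 : ℝ) else 0)) = 0) ∧
      ((∀ k : Fin K, (∑ h, μ h * (if hyp h x = k then (1 : ℝ) else 0)) = 1 / K) →
        (∑ h, μ h * (if hyp h x ≠ Y x then (1 : ℝ) else 0)) = ((K : ℝ) - 1) / K) := by
  intro x
  set p : Fin K → ℝ := fun k => ∑ h, μ h * (if hyp h x = k then (1 : ℝ) else 0) with hpdef
  have hp_nonneg : ∀ k, 0 ≤ p k := fun k =>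
    Finset.sum_nonneg fun h _ => mul_nonneg (hμ0 h) (by split <;> norm_num)
  have hsum_p : ∑ k, p k = 1 := by
    rw [hpdef]
    rw [Finset.sum_comm]
    have : ∀ h : H, ∑ k, μ h * (if hyp h x = k then (1 : ℝ) else 0) = μ h := by
      intro h; simp
    rw [Finset.sum_congr rfl fun h _ => this h, hμ1]
  have herr : (∑ h, μ h * (if hyp h x ≠ Y x then (1 : ℝ) else 0)) = 1 - p (Y x) := by
    have : ∀ h : H, μ h * (if hyp h x ≠ Y x then (1 : ℝ) else 0)
        = μ h - μ h * (if hyp h x = Y x then (1 : ℝ) else 0) := by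
      intro h; by_cases hc : hyp h x = Y x <;> simp [hc]
    rw [Finset.sum_congr rfl fun h _ => this h, Finset.sum_sub_distrib, hμ1, hpdef]
  have key : ∀ a b : Fin K, (if a = b then (1 : ℝ) else 0)
      = ∑ k, (if a = k then (1 : ℝ) else 0) * (if b = k then (1 : ℝ) else 0) := by
    intro a b
    have hterm : ∀ k : Fin K, (if a = k then (1 : ℝ) else 0) * (if b = k then (1 : ℝ) else 0)
        = if a = k ∧ b = k then (1 : ℝ) else 0 := by
      intro k; by_cases h1 : a = k <;> by_cases h2 : b = k <;> simp [h1, h2]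
    rw [Finset.sum_congr rfl fun k _ => hterm k]
    by_cases h : a = b
    · subst h; simp
    · rw [if_neg h]
      refine (Finset.sum_eq_zero fun k _ => ?_).symm
      rw [if_neg]; rintro ⟨h1, h2⟩; exact h (h1.trans h2.symm)
  have hdis : (∑ h, ∑ h', μ h * μ h' * (if hyp h x ≠ hyp h' x then (1 : ℝ) else 0))
      = 1 - ∑ k, p k * p k := by
    have step : ∀ h h' : H, μ h * μ h' * (if hyp h x ≠ hyp h' x then (1 : ℝ) else 0)
        = μ h * μ h' - μ h * μ h' * (if hyp h x = hyp h' x then (1 : ℝ) else 0) := by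
      intro h h'; by_cases hc : hyp h x = hyp h' x <;> simp [hc]
    have agree : (∑ k, p k * p k)
        = ∑ h, ∑ h', μ h * μ h' * (if hyp h x = hyp h' x then (1 : ℝ) else 0) := by
      have hpexp : ∀ k, p k * p k
          = ∑ h, ∑ h', (μ h * (if hyp h x = k then (1 : ℝ) else 0))
              * (μ h' * (if hyp h' x = k then (1 : ℝ) else 0)) := by
        intro k; rw [hpdef, Finset.sum_mul_sum]
      rw [Finset.sum_congr rfl fun k _ => hpexp k]
      rw [Finset.sum_comm]
      refine Finset.sum_congr rfl fun h _ => ?_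
      rw [Finset.sum_comm]
      refine Finset.sum_congr rfl fun h' _ => ?_
      rw [key (hyp h x) (hyp h' x), Finset.mul_sum]
      refine Finset.sum_congr rfl fun k _ => ?_
      ring
    have tot : (∑ h, ∑ h', μ h * μ h') = 1 := by
      rw [← Finset.sum_mul_sum, hμ1, one_mul]
    rw [Finset.sum_congr rfl fun h _ => Finset.sum_congr rfl fun h' _ => step h h']
    rw [Finset.sum_congr rfl fun h _ => Finset.sum_sub_distrib (s := Finset.univ) _ _]
    rw [Finset.sum_sub_distrib, tot, ← agree]
  have hsq : (∑ k, p k * p k) = p (Y x) := by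
    rcases heasyhard x with heasy | hhard
    · have hpy : p (Y x) = 1 := heasy
      have hothers : ∀ k ∈ Finset.univ, k ≠ Y x → p k = 0 := by
        have hzero : ∑ k ∈ Finset.univ.erase (Y x), p k = 0 := by
          have := Finset.add_sum_erase Finset.univ p (Finset.mem_univ (Y x))
          rw [← this, hpy] at hsum_p
          linarith
        intro k _ hk
        have := (Finset.sum_eq_zero_iff_of_nonneg fun j _ => hp_nonneg j).mp hzero k
          (Finset.mem_erase.mpr ⟨hk, Finset.mem_univ k⟩)
        exact this
      rw [Finset.sum_eq_single (Y x)
        (fun k _ hk => by rw [hothers k (Finset.mem_univ k) hk, zero_mul])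
        (fun h => absurd (Finset.mem_univ (Y x)) h), hpy, one_mul]
    · have hK : (K : ℝ) ≠ 0 := Nat.cast_ne_zero.mpr (NeZero.ne K)
      have hpk : ∀ k, p k = 1 / K := hhard
      rw [Finset.sum_congr rfl fun k _ => by rw [hpk k], hpk (Y x),
        Finset.sum_const, Finset.card_univ, Fintype.card_fin, nsmul_eq_mul]
      field_simp
  refine ⟨by rw [hdis, herr, hsq], fun heasy => ?_, fun hhard => ?_⟩
  · have hpy : p (Y x) = 1 := heasy
    rw [herr, hpy]; ring
  · have hK : (K : ℝ) ≠ 0 := Nat.cast_ne_zero.mpr (NeZero.ne K)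
    have hpY : p (Y x) = 1 / K := hhard (Y x)
    rw [herr, hpY]
    field_simp
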